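/- Let g = g_1 ⋯ g_e ∈ F_2[X] with g_i distinct irreducible polynomials of degrees d_i, let r = deg g, and suppose g divides X^n - 1. The burst-covering radius b of the binary cyclic code of length n with generator polynomial g, defined as b = max over nonzero f ∈ F_2[X] with deg f < r of (min over k ≥ 0 of deg(X^k f mod g)) + 1, satisfies r - min_i d_i + 1 ≤ b ≤ r. -/

import Mathlib

open Polynomial

/-- Basic bounds on the burst-covering radius of a binary cyclic code with
squarefree generator polynomial `G = g_1 ⋯ g_e` of degree `r`:
`r - min_i deg g_i + 1 ≤ b ≤ r`, where
`b = max_{f ≠ 0, deg f < r} min_{k ≥ 0} deg(X^k f mod G) + 1`. -/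
theorem stmt13 (n e r : ℕ) (hn : 0 < n) (he : 0 < e)
    (g : Fin e → Polynomial (ZMod 2))
    (hirr : ∀ i, Irreducible (g i)) (hinj : Function.Injective g)
    (G : Polynomial (ZMod 2)) (hG : G = ∏ i : Fin e, g i)
    (hr : G.natDegree = r) (hdvd : G ∣ X ^ n - 1)
    (b : ℕ)
    (hb : b = sSup {v : ℕ | ∃ f : Polynomial (ZMod 2), f ≠ 0 ∧ f.natDegree < r ∧
      v = sInf {w : ℕ | ∃ k : ℕ, w = ((X ^ k * f) % G).natDegree + 1}}) :
    r - sInf {d : ℕ | ∃ i : Fin e, d = (g i).natDegree} + 1 ≤ b ∧ b ≤ r := by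
  have h2 : ∀ a : ZMod 2, a ≠ 0 → a = 1 := by decide
  have hgne : ∀ i, g i ≠ 0 := fun i => (hirr i).ne_zero
  have hgmonic : ∀ i, (g i).Monic := fun i => h2 _ (leadingCoeff_ne_zero.mpr (hgne i))
  have hGmonic : G.Monic := hG ▸ monic_prod_of_monic _ _ (fun i _ => hgmonic i)
  have hG0 : G ≠ 0 := hGmonic.ne_zero
  have hgdeg : ∀ i, 0 < (g i).natDegree := fun i => (hirr i).natDegree_pos
  have hGdeg : G.natDegree = ∑ i, (g i).natDegree := by
    rw [hG, natDegree_prod _ _ (fun i _ => hgne i)]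
  have hr1 : 1 ≤ r := by
    rw [← hr, hGdeg]
    calc 1 ≤ ∑ _i : Fin e, 1 := by simp; omega
    _ ≤ _ := Finset.sum_le_sum (fun i _ => hgdeg i)
  have hG1 : G ≠ 1 := by
    intro h
    rw [h, natDegree_one] at hr
    omega
  have hmod : ∀ p : Polynomial (ZMod 2), p % G = p %ₘ G := by
    intro p
    rw [Polynomial.mod_def, hGmonic.leadingCoeff, inv_one, map_one, mul_one]
  set S := {v : ℕ | ∃ f : Polynomial (ZMod 2), f ≠ 0 ∧ f.natDegree < r ∧
      v = sInf {w : ℕ | ∃ k : ℕ, w = ((X ^ k * f) % G).natDegree + 1}} with hS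
  have hub : ∀ v ∈ S, v ≤ r := by
    rintro v ⟨f, hf0, hfdeg, rfl⟩
    have hmem : ((X ^ 0 * f) % G).natDegree + 1 ∈
        {w : ℕ | ∃ k : ℕ, w = ((X ^ k * f) % G).natDegree + 1} := ⟨0, rfl⟩
    calc sInf _ ≤ ((X ^ 0 * f) % G).natDegree + 1 := Nat.sInf_le hmem
      _ ≤ r := by
        rw [hmod]
        have := natDegree_modByMonic_lt (X ^ 0 * f) hGmonic hG1
        omega
  have hbub : b ≤ r := by
    rw [hb]
    exact csSup_le' hub
  refine ⟨?_, hbub⟩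
  -- lower bound
  set D := {d : ℕ | ∃ i : Fin e, d = (g i).natDegree} with hD
  have hDne : D.Nonempty := ⟨(g ⟨0, he⟩).natDegree, ⟨0, he⟩, rfl⟩
  obtain ⟨i, hi⟩ : sInf D ∈ D := Nat.sInf_mem hDne
  set d := sInf D with hd
  have hd1 : 1 ≤ d := hi ▸ hgdeg i
  have hdr : d ≤ r := by
    rw [← hr, hGdeg, hi]
    exact Finset.single_le_sum (f := fun j => (g j).natDegree) (fun j _ => Nat.zero_le _) (Finset.mem_univ i)
  set f : Polynomial (ZMod 2) := ∏ j ∈ Finset.univ.erase i, g j with hf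
  have hGf : G = g i * f := by
    rw [hG, hf, Finset.mul_prod_erase _ _ (Finset.mem_univ i)]
  have hf0 : f ≠ 0 := Finset.prod_ne_zero_iff.mpr (fun j _ => hgne j)
  have hfdeg : f.natDegree = r - d := by
    have : r = (g i).natDegree + f.natDegree := by
      rw [← hr, hGf, natDegree_mul (hgne i) hf0]
    omega
  have hfltr : f.natDegree < r := by omega
  have hprime : Prime (g i) := (hirr i).prime
  have hnotdvd : ∀ k : ℕ, ¬ G ∣ X ^ k * f := by
    intro k hk
    have hgik : g i ∣ X ^ k * f := dvd_trans ⟨f, hGf⟩ hk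
    rcases hprime.dvd_mul.mp hgik with h | h
    · have hX : g i ∣ X := hprime.dvd_of_dvd_pow h
      have h1 : g i ∣ (1 : Polynomial (ZMod 2)) := by
        have hXn : g i ∣ X ^ n := hX.trans (dvd_pow_self X hn.ne')
        have hXn1 : g i ∣ X ^ n - 1 := dvd_trans (⟨f, hGf⟩ : g i ∣ G) hdvd
        have := dvd_sub hXn hXn1
        simpa using this
      exact (hirr i).not_isUnit (isUnit_of_dvd_one h1)
    · obtain ⟨j, hj, hdvdj⟩ := hprime.exists_mem_finset_dvd h
      have : g i = g j :=
        eq_of_monic_of_associated (hgmonic i) (hgmonic j)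
          ((hirr i).associated_of_dvd (hirr j) hdvdj)
      exact (Finset.ne_of_mem_erase hj) (hinj this).symm
  have hfm : ∀ k : ℕ, r - d + 1 ≤ ((X ^ k * f) % G).natDegree + 1 := by
    intro k
    rw [hmod]
    set m := (X ^ k * f) %ₘ G with hm
    have hm0 : m ≠ 0 := fun h => hnotdvd k ((modByMonic_eq_zero_iff_dvd hGmonic).mp h)
    have hfdvd : f ∣ m := by
      rw [hm, modByMonic_eq_sub_mul_div _ G]
      exact dvd_sub (dvd_mul_left f (X ^ k)) (Dvd.dvd.mul_right (⟨g i, by rw [hGf, mul_comm]⟩ : f ∣ G) _)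
    have := natDegree_le_of_dvd hfdvd hm0
    omega
  have hWne : ({w : ℕ | ∃ k : ℕ, w = ((X ^ k * f) % G).natDegree + 1}).Nonempty :=
    ⟨_, 0, rfl⟩
  have hvS : sInf {w : ℕ | ∃ k : ℕ, w = ((X ^ k * f) % G).natDegree + 1} ∈ S :=
    ⟨f, hf0, hfltr, rfl⟩
  have hvge : r - d + 1 ≤ sInf {w : ℕ | ∃ k : ℕ, w = ((X ^ k * f) % G).natDegree + 1} := by
    obtain ⟨k, hk⟩ := Nat.sInf_mem hWne
    rw [hk]
    exact hfm k
  have hble : sInf {w : ℕ | ∃ k : ℕ, w = ((X ^ k * f) % G).natDegree + 1} ≤ b := by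
    rw [hb]
    exact le_csSup ⟨r, hub⟩ hvS
  omega
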